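/- Let X be an n×n real matrix and K ⊆ ℝ^n a proper cone. If S X T maps ℝ^n_+ into ℝ^n_+ for every invertible n×n matrix T with T(ℝ^n_+) ⊆ K and every invertible n×n matrix S with S(K) ⊆ ℝ^n_+, then X(K) ⊆ K. -/

import Mathlib

open Matrix Set

/-- The nonnegative orthant in `ℝ^n`. -/
def posOrth (n : ℕ) : Set (Fin n → ℝ) := {x | ∀ i, 0 ≤ x i}

/-- A proper cone: closed, pointed convex cone with nonempty interior. -/
def IsProperCone {n : ℕ} (K : Set (Fin n → ℝ)) : Prop :=
  (∀ x ∈ K, ∀ y ∈ K, x + y ∈ K) ∧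
  (∀ (c : ℝ), 0 ≤ c → ∀ x ∈ K, c • x ∈ K) ∧
  IsClosed K ∧ K ∩ (-K) = {0} ∧ (interior K).Nonempty

/-- The dual cone of a set in `ℝ^n`. -/
def dualCone {n : ℕ} (K : Set (Fin n → ℝ)) : Set (Fin n → ℝ) :=
  {y | ∀ x ∈ K, 0 ≤ y ⬝ᵥ x}

/-- `(K₁,K₂)`-semipositivity of a matrix. -/
def SemiposCone {n m : ℕ} (K₁ : Set (Fin n → ℝ)) (K₂ : Set (Fin m → ℝ))
    (A : Matrix (Fin m) (Fin n) ℝ) : Prop :=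
  ∃ x ∈ interior K₁, A.mulVec x ∈ interior K₂

/-- Semipositivity with respect to the nonnegative orthants. -/
def Semipos {n m : ℕ} (A : Matrix (Fin m) (Fin n) ℝ) : Prop :=
  ∃ x : Fin n → ℝ, (∀ i, 0 < x i) ∧ ∀ j, 0 < A.mulVec x j

/-- Helper: if `B + d*C ≥ 0` for all small positive `d` avoiding one bad value, then `B ≥ 0`. -/
private lemma limit_helper {B C bad dmax : ℝ} (hdmax : 0 < dmax)
    (H : ∀ d : ℝ, 0 < d → d < dmax → d ≠ bad → 0 ≤ B + d * C) : 0 ≤ B := by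
  by_contra hB
  push_neg at hB
  have key : ∀ d : ℝ, 0 < d → d ≤ min (dmax / 2) (if C ≤ 0 then dmax / 2 else -B / (2 * C)) →
      B + d * C < 0 := by
    intro d hd hle
    by_cases hC : C ≤ 0
    · nlinarith
    · push_neg at hC
      have h2 : d ≤ -B / (2 * C) := le_trans hle (by simp [if_neg (not_le.mpr hC)])
      have : d * (2 * C) ≤ -B := (le_div_iff₀ (by positivity)).mp h2
      nlinarith
  set d₁ : ℝ := min (dmax / 2) (if C ≤ 0 then dmax / 2 else -B / (2 * C)) with hd₁
  have hd₁pos : 0 < d₁ := by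
    apply lt_min (by linarith)
    by_cases hC : C ≤ 0
    · simp [if_pos hC]; linarith
    · push_neg at hC
      simp only [if_neg (not_le.mpr hC)]
      exact div_pos (by linarith) (by linarith)
  have hd₁lt : d₁ < dmax := lt_of_le_of_lt (min_le_left _ _) (by linarith)
  rcases eq_or_ne d₁ bad with hbad | hbad
  · have h1 : d₁ / 2 ≠ bad := by rw [← hbad]; intro hc; linarith
    have := H (d₁ / 2) (by linarith) (by linarith) h1
    have := key (d₁ / 2) (by linarith) (by linarith)
    linarith
  · have := H d₁ hd₁pos hd₁lt hbad
    have := key d₁ hd₁pos le_rfl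
    linarith

private lemma sum_mem_cone {n : ℕ} {K : Set (Fin n → ℝ)}
    (hadd : ∀ x ∈ K, ∀ y ∈ K, x + y ∈ K)
    (hsmul : ∀ c : ℝ, 0 ≤ c → ∀ x ∈ K, c • x ∈ K)
    (h0 : (0 : Fin n → ℝ) ∈ K)
    (s : Finset (Fin n)) (c : Fin n → ℝ) (v : Fin n → Fin n → ℝ)
    (hc : ∀ i, 0 ≤ c i) (hv : ∀ i, v i ∈ K) :
    ∑ i ∈ s, c i • v i ∈ K := by
  classical
  induction s using Finset.induction with
  | empty => simpa
  | insert _ _ hx ih =>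
    rw [Finset.sum_insert hx]
    exact hadd _ (hsmul _ (hc _) _ (hv _)) _ ih

private lemma linmap_eq_dot {n : ℕ} (f : (Fin n → ℝ) →ₗ[ℝ] ℝ) (v : Fin n → ℝ) :
    f v = (fun i => f (Pi.single i 1)) ⬝ᵥ v := by
  conv_lhs => rw [← Finset.univ_sum_single v]
  rw [map_sum]
  unfold dotProduct
  refine Finset.sum_congr rfl fun i _ => ?_
  have hsing : (Pi.single i (v i) : Fin n → ℝ) = v i • (Pi.single i 1 : Fin n → ℝ) := by
    funext j
    by_cases hj : j = i <;> simp [Pi.single_apply, hj]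
  rw [hsing, f.map_smul]
  simp [mul_comm]

private lemma mem_of_dual {n : ℕ} {K : Set (Fin n → ℝ)}
    (hadd : ∀ x ∈ K, ∀ y ∈ K, x + y ∈ K)
    (hsmul : ∀ c : ℝ, 0 ≤ c → ∀ x ∈ K, c • x ∈ K)
    (hcl : IsClosed K) (h0 : (0 : Fin n → ℝ) ∈ K)
    {x : Fin n → ℝ} (hx : ∀ φ ∈ dualCone K, 0 ≤ φ ⬝ᵥ x) : x ∈ K := by
  have hconv : Convex ℝ K := fun y hy z hz a b ha hb _ =>
    hadd _ (hsmul a ha y hy) _ (hsmul b hb z hz)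
  by_contra hxK
  obtain ⟨f, u, hfs, hfx⟩ := geometric_hahn_banach_closed_point hconv hcl hxK
  have hu0 : 0 < u := by simpa using hfs 0 h0
  have hfy : ∀ y ∈ K, f y ≤ 0 := by
    intro y hy
    by_contra hfy
    push_neg at hfy
    have ht : (0:ℝ) ≤ (u + 1) / f y := by positivity
    have := hfs _ (hsmul _ ht _ hy)
    rw [f.map_smul] at this
    have : (u + 1) / f y * f y = u + 1 := div_mul_cancel₀ _ (ne_of_gt hfy)
    simp only [smul_eq_mul] at *
    linarith [hfs _ (hsmul _ ht _ hy), this]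
  set φ : Fin n → ℝ := fun i => -(f (Pi.single i 1)) with hφdef
  have hrep : ∀ v, φ ⬝ᵥ v = -(f v) := by
    intro v
    have h1 := linmap_eq_dot (f : (Fin n → ℝ) →ₗ[ℝ] ℝ) v
    rw [ContinuousLinearMap.coe_coe] at h1
    have h2 : φ = -(fun i => f (Pi.single i 1)) := by funext i; simp [hφdef]
    rw [h2, neg_dotProduct, ← h1]
  have hφK : φ ∈ dualCone K := by
    intro y hy
    rw [hrep y]
    linarith [hfy y hy]
  have := hx φ hφK
  rw [hrep x] at this
  linarith

private lemma exists_dual_basis {n : ℕ} {K : Set (Fin n → ℝ)}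
    (hadd : ∀ x ∈ K, ∀ y ∈ K, x + y ∈ K)
    (hsmul : ∀ c : ℝ, 0 ≤ c → ∀ x ∈ K, c • x ∈ K)
    (hcl : IsClosed K) (hpointed : K ∩ (-K) = {0}) (h0 : (0 : Fin n → ℝ) ∈ K) :
    ∃ ψ : Fin n → (Fin n → ℝ), (∀ i, ψ i ∈ dualCone K) ∧ (Matrix.of ψ).det ≠ 0 := by
  classical
  have hspan : Submodule.span ℝ (dualCone K) = ⊤ := by
    by_contra hne
    obtain ⟨f, hf0, hker⟩ :=
      Submodule.exists_le_ker_of_lt_top _ (lt_top_iff_ne_top.mpr hne)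
    set u : Fin n → ℝ := fun i => f (Pi.single i 1) with hu
    have hrep : ∀ v, f v = u ⬝ᵥ v := fun v => linmap_eq_dot f v
    have hu0 : u ≠ 0 := by
      intro hc
      apply hf0
      refine LinearMap.ext fun v => ?_
      rw [hrep v, hc]
      simp
    have hzero : ∀ φ ∈ dualCone K, φ ⬝ᵥ u = 0 := by
      intro φ hφ
      have : f φ = 0 := hker (Submodule.subset_span hφ)
      rw [hrep φ, dotProduct_comm] at this
      exact this
    have huK : u ∈ K := mem_of_dual hadd hsmul hcl h0 (fun φ hφ => (hzero φ hφ).ge)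
    have hnuK : -u ∈ K := by
      apply mem_of_dual hadd hsmul hcl h0
      intro φ hφ
      rw [dotProduct_neg, hzero φ hφ]
      simp
    have : u ∈ K ∩ (-K) := ⟨huK, by simpa using hnuK⟩
    rw [hpointed] at this
    exact hu0 this
  obtain ⟨b, hbsub, hbspan, hbli⟩ := exists_linearIndependent ℝ (dualCone K)
  rw [hspan] at hbspan
  let bas : Module.Basis b ℝ (Fin n → ℝ) :=
    Module.Basis.mk hbli (by rw [Subtype.range_coe, hbspan])
  haveI : Fintype b := FiniteDimensional.fintypeBasisIndex bas
  have hcard : Fintype.card b = n := by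
    rw [← Module.finrank_eq_card_basis bas, Module.finrank_fin_fun]
  let e := Fintype.equivFinOfCardEq hcard
  set ψ : Fin n → (Fin n → ℝ) := fun i => ((e.symm i : b) : Fin n → ℝ) with hψ
  have hψb : ∀ i, ψ i ∈ b := fun i => (e.symm i).2
  refine ⟨ψ, fun i => hbsub (hψb i), ?_⟩
  intro hdet
  obtain ⟨v, hv0, hMv⟩ := (Matrix.exists_mulVec_eq_zero_iff).mpr hdet
  have hψv : ∀ i, ψ i ⬝ᵥ v = 0 := by
    intro i
    have := congr_fun hMv i
    simpa [Matrix.mulVec, Matrix.of_apply] using this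
  have hvspan : v ∈ Submodule.span ℝ (Set.range ψ) := by
    have : Set.range ψ = b := by
      apply Set.Subset.antisymm
      · rintro _ ⟨i, rfl⟩; exact hψb i
      · intro x hx
        exact ⟨e ⟨x, hx⟩, by simp [hψ]⟩
    rw [this, hbspan]
    trivial
  obtain ⟨c, hc⟩ := (Submodule.mem_span_range_iff_exists_fun ℝ).mp hvspan
  have hsum : ∀ s : Finset (Fin n), (∑ i ∈ s, c i • ψ i) ⬝ᵥ v = ∑ i ∈ s, c i * (ψ i ⬝ᵥ v) := by
    intro s
    induction s using Finset.induction with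
    | empty => simp
    | insert _ _ hx ih =>
      rw [Finset.sum_insert hx, Finset.sum_insert hx, add_dotProduct, smul_dotProduct, ih,
        smul_eq_mul]
  have hvv : v ⬝ᵥ v = 0 := by
    have h2 := hsum Finset.univ
    rw [hc] at h2
    rw [h2]
    refine Finset.sum_eq_zero fun i _ => ?_
    rw [hψv i, mul_zero]
  exact hv0 (dotProduct_self_eq_zero.mp hvv)

theorem stmt_11 {n : ℕ} (K : Set (Fin n → ℝ)) (hK : IsProperCone K)
    (X : Matrix (Fin n) (Fin n) ℝ)
    (h : ∀ T S : Matrix (Fin n) (Fin n) ℝ, IsUnit T.det → IsUnit S.det →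
      (∀ x ∈ posOrth n, T.mulVec x ∈ K) → (∀ x ∈ K, S.mulVec x ∈ posOrth n) →
      ∀ x ∈ posOrth n, (S * X * T).mulVec x ∈ posOrth n) :
    ∀ x ∈ K, X.mulVec x ∈ K := by
  classical
  obtain ⟨hadd, hsmul, hclosed, hpointed, e, he⟩ := hK
  have h0K : (0 : Fin n → ℝ) ∈ K := by
    have : (0 : Fin n → ℝ) ∈ K ∩ (-K) := by rw [hpointed]; rfl
    exact this.1
  rcases Nat.eq_zero_or_pos n with hn | hn
  · subst hn
    intro x hx
    have : X.mulVec x = x := Subsingleton.elim _ _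
    rwa [this]
  have hconv : Convex ℝ K := fun y hy z hz a b ha hb _ =>
    hadd _ (hsmul a ha y hy) _ (hsmul b hb z hz)
  obtain ⟨ψ, hψdual, hψdet⟩ := exists_dual_basis hadd hsmul hclosed hpointed h0K
  set Ψ : Matrix (Fin n) (Fin n) ℝ := Matrix.of ψ with hΨ
  set i0 : Fin n := ⟨0, hn⟩
  set u0 : Fin n → ℝ := Pi.single i0 1 with hu0
  have hu0pos : u0 ∈ posOrth n := by
    intro i
    by_cases hi : i = i0 <;> simp [hu0, Pi.single_apply, hi]
  -- dual cone closure properties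
  have hdual_add : ∀ φ₁ ∈ dualCone K, ∀ φ₂ ∈ dualCone K, φ₁ + φ₂ ∈ dualCone K := by
    intro φ₁ h1 φ₂ h2 x hx
    rw [add_dotProduct]
    exact add_nonneg (h1 x hx) (h2 x hx)
  have hdual_smul : ∀ (c : ℝ), 0 ≤ c → ∀ φ ∈ dualCone K, c • φ ∈ dualCone K := by
    intro c hc φ hφ x hx
    rw [smul_dotProduct]
    exact mul_nonneg hc (hφ x hx)
  -- core : interior points
  have core : ∀ φ ∈ dualCone K, ∀ z ∈ interior K, 0 ≤ φ ⬝ᵥ X.mulVec z := by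
    intro φ hφ z hz
    obtain ⟨r, hr, hball⟩ := Metric.isOpen_iff.mp isOpen_interior z hz
    set εbad : ℝ := -(Ψ.updateRow i0 φ).det / Ψ.det with hεbad
    have main : ∀ δ : ℝ, 0 < δ → δ < r → δ ≠ -(∑ i, z i) → ∀ ε : ℝ, 0 < ε → ε ≠ εbad →
        0 ≤ (φ + ε • ψ i0) ⬝ᵥ X.mulVec (z + δ • u0) := by
      intro δ hδ hδr hδbad ε hε hεb
      set T : Matrix (Fin n) (Fin n) ℝ := Matrix.of (fun i j => z i) + δ • 1 with hT
      set S : Matrix (Fin n) (Fin n) ℝ := Ψ.updateRow i0 (φ + ε • ψ i0) with hS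
      -- columns of T
      have hTcol : ∀ j, (fun i => T i j) = z + δ • (Pi.single j 1 : Fin n → ℝ) := by
        intro j
        funext i
        by_cases hij : i = j <;>
          simp [hT, Matrix.one_apply, Pi.single_apply, hij, eq_comm]
      have hTcolK : ∀ j, (z + δ • (Pi.single j 1 : Fin n → ℝ)) ∈ K := by
        intro j
        apply interior_subset
        apply hball
        rw [Metric.mem_ball, dist_eq_norm, add_sub_cancel_left, norm_smul]
        rw [Pi.norm_single, norm_one, mul_one, Real.norm_eq_abs, abs_of_pos hδ]
        exact hδr
      -- T maps orthant into K
      have hTmap : ∀ x ∈ posOrth n, T.mulVec x ∈ K := by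
        intro x hx
        have : T.mulVec x = ∑ j, x j • (z + δ • (Pi.single j 1 : Fin n → ℝ)) := by
          funext i
          rw [Finset.sum_apply]
          simp only [Matrix.mulVec, dotProduct]
          refine Finset.sum_congr rfl fun j _ => ?_
          have := congr_fun (hTcol j) i
          rw [Pi.smul_apply, ← this, smul_eq_mul]
          ring
        rw [this]
        exact sum_mem_cone hadd hsmul h0K _ _ _ hx hTcolK
      -- determinant of T
      have hTdet : T.det ≠ 0 := by
        have hrw : T = δ • ((1 : Matrix (Fin n) (Fin n) ℝ) +
            Matrix.replicateCol Unit (δ⁻¹ • z) * Matrix.replicateRow Unit (fun _ => (1:ℝ))) := by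
          ext i j
          simp [hT, Matrix.mul_apply, Matrix.one_apply, Matrix.replicateCol, Matrix.replicateRow,
            smul_add, mul_add]
          rcases eq_or_ne i j with hij | hij <;>
            field_simp [hij] <;> ring
        rw [hrw, Matrix.det_smul, Matrix.det_one_add_replicateCol_mul_replicateRow]
        have h1 : (fun _ => (1:ℝ)) ⬝ᵥ (δ⁻¹ • z) = δ⁻¹ * ∑ i, z i := by
          simp [dotProduct, Finset.mul_sum]
        rw [h1]
        apply mul_ne_zero (pow_ne_zero _ (ne_of_gt hδ))
        intro hc
        apply hδbad
        have : δ * (1 + δ⁻¹ * ∑ i, z i) = 0 := by rw [hc, mul_zero]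
        rw [mul_add, mul_one, ← mul_assoc, mul_inv_cancel₀ (ne_of_gt hδ), one_mul] at this
        linarith
      -- S maps K into orthant
      have hSrow : ∀ i, S i ∈ dualCone K := by
        intro i
        rcases eq_or_ne i i0 with hi | hi
        · rw [hS, hi, Matrix.updateRow_self]
          exact hdual_add _ hφ _ (hdual_smul _ (le_of_lt hε) _ (hψdual i0))
        · rw [hS, Matrix.updateRow_ne hi]
          exact hψdual i
      have hSmap : ∀ x ∈ K, S.mulVec x ∈ posOrth n := by
        intro x hx i
        exact hSrow i x hx
      -- determinant of S
      have hSdet : S.det ≠ 0 := by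
        rw [hS, Matrix.det_updateRow_add, Matrix.det_updateRow_smul,
          show ψ i0 = Ψ i0 from rfl, Matrix.updateRow_eq_self]
        intro hc
        apply hεb
        rw [hεbad]
        field_simp
        linarith
      -- apply the hypothesis
      have happ := h T S (isUnit_iff_ne_zero.mpr hTdet) (isUnit_iff_ne_zero.mpr hSdet)
        hTmap hSmap u0 hu0pos i0
      have hTu0 : T.mulVec u0 = z + δ • u0 := by
        rw [hu0, Matrix.mulVec_single]
        funext i
        rw [MulOpposite.op_one, one_smul]
        exact congr_fun (hTcol i0) i
      have hexp : ((S * X * T).mulVec u0) i0 = (φ + ε • ψ i0) ⬝ᵥ X.mulVec (z + δ • u0) := by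
        rw [← Matrix.mulVec_mulVec, ← Matrix.mulVec_mulVec, hTu0]
        show S i0 ⬝ᵥ _ = _
        rw [hS, Matrix.updateRow_self]
      rw [hexp] at happ
      exact happ
    -- take limits: first in ε, then in δ
    have hδlim : ∀ δ : ℝ, 0 < δ → δ < r → δ ≠ -(∑ i, z i) →
        0 ≤ φ ⬝ᵥ X.mulVec (z + δ • u0) := by
      intro δ hδ hδr hδbad
      apply limit_helper (C := ψ i0 ⬝ᵥ X.mulVec (z + δ • u0)) (bad := εbad) one_pos
      intro ε hε _ hεb
      have := main δ hδ hδr hδbad ε hε hεb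
      rwa [add_dotProduct, smul_dotProduct, smul_eq_mul] at this
    apply limit_helper (C := φ ⬝ᵥ X.mulVec u0) (bad := -(∑ i, z i)) hr
    intro δ hδ hδr hδb
    have := hδlim δ hδ hδr hδb
    rwa [Matrix.mulVec_add, Matrix.mulVec_smul, dotProduct_add, dotProduct_smul,
      smul_eq_mul] at this
  -- extend to all of K
  have core2 : ∀ φ ∈ dualCone K, ∀ z ∈ K, 0 ≤ φ ⬝ᵥ X.mulVec z := by
    intro φ hφ z hz
    apply limit_helper (C := φ ⬝ᵥ X.mulVec e - φ ⬝ᵥ X.mulVec z) (bad := 2) one_pos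
    intro t ht ht1 _
    have hmem : t • e + (1 - t) • z ∈ interior K :=
      hconv.combo_interior_self_mem_interior he hz ht (by linarith) (by ring)
    have := core φ hφ _ hmem
    rw [Matrix.mulVec_add, Matrix.mulVec_smul, Matrix.mulVec_smul, dotProduct_add,
      dotProduct_smul, dotProduct_smul, smul_eq_mul, smul_eq_mul] at this
    nlinarith [this]
  intro x hx
  exact mem_of_dual hadd hsmul hclosed h0K (fun φ hφ => core2 φ hφ x hx)
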